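/- Let X, Y be real symmetric matrices indexed by V(G) with X + Y = A_G (so Y_{ij} = −X_{ij} whenever ij ∉ E) and ⟨X,Y⟩ = 0 in the Frobenius inner product. Suppose ∑_{ij ∈ E} X_{ij}² ≤ (r−1) ∑_{ij ∉ E} X_{ij}² for some r > 1. Then ∑_{i,j} Y_{ij}² ≥ (1/(r−1)) ∑_{i,j} X_{ij}². -/
import Mathlib


open Matrix Finset SimpleGraph

variable {V : Type*} [Fintype V] [DecidableEq V]

set_option linter.unusedSectionVars false

lemma adjH (G : SimpleGraph V) [DecidableRel G.Adj] : (G.adjMatrix ℝ).IsHermitian := by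
  unfold Matrix.IsHermitian
  rw [conjTranspose_eq_transpose_of_trivial]
  exact G.transpose_adjMatrix

/-- `graphEig G k` : the (k+1)-st largest eigenvalue (with multiplicity) of the adjacency
matrix of `G`. -/
noncomputable def graphEig (G : SimpleGraph V) [DecidableRel G.Adj] (k : ℕ) : ℝ :=
  ((Finset.univ.val.map (adjH G).eigenvalues).sort (· ≥ ·)).getD k 0

theorem frobenius_orthogonal_decomposition (G : SimpleGraph V) [DecidableRel G.Adj]
    (X Y : Matrix V V ℝ) (hXs : X.IsSymm) (hYs : Y.IsSymm)
    (hXY : X + Y = G.adjMatrix ℝ)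
    (hfro : ∑ i, ∑ j, X i j * Y i j = 0)
    (r : ℝ) (hr : 1 < r)
    (h : ∑ i, ∑ j, (if G.Adj i j then X i j ^ 2 else 0)
        ≤ (r - 1) * ∑ i, ∑ j, (if ¬ G.Adj i j then X i j ^ 2 else 0)) :
    (1 / (r - 1)) * ∑ i, ∑ j, X i j ^ 2 ≤ ∑ i, ∑ j, Y i j ^ 2 := by
  have hYX : ∀ i j, ¬ G.Adj i j → Y i j = - X i j := by
    intro i j hij
    have := congrFun (congrFun hXY i) j
    simp only [Matrix.add_apply, SimpleGraph.adjMatrix_apply, if_neg hij] at this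
    linarith
  set a := ∑ i, ∑ j, (if G.Adj i j then X i j ^ 2 else 0) with ha
  set b := ∑ i, ∑ j, (if ¬ G.Adj i j then X i j ^ 2 else 0) with hb
  set c := ∑ i, ∑ j, (if G.Adj i j then Y i j ^ 2 else 0) with hc
  have ha0 : 0 ≤ a := Finset.sum_nonneg fun i _ => Finset.sum_nonneg fun j _ => by
    positivity
  have hb0 : 0 ≤ b := Finset.sum_nonneg fun i _ => Finset.sum_nonneg fun j _ => by
    positivity
  have hc0 : 0 ≤ c := Finset.sum_nonneg fun i _ => Finset.sum_nonneg fun j _ => by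
    positivity
  have hsplitX : ∑ i, ∑ j, X i j ^ 2 = a + b := by
    rw [ha, hb, ← Finset.sum_add_distrib]
    congr 1; funext i
    rw [← Finset.sum_add_distrib]
    apply Finset.sum_congr rfl
    intro j _
    by_cases hij : G.Adj i j <;> simp [hij]
  have hsplitY : ∑ i, ∑ j, Y i j ^ 2 = c + b := by
    rw [hc, hb, ← Finset.sum_add_distrib]
    congr 1; funext i
    rw [← Finset.sum_add_distrib]
    apply Finset.sum_congr rfl
    intro j _
    by_cases hij : G.Adj i j
    · simp [hij]
    · simp [hij, hYX i j hij]
  have hcross : ∑ i, ∑ j, (if G.Adj i j then X i j * Y i j else 0) = b := by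
    have : ∑ i, ∑ j, X i j * Y i j
        = ∑ i, ∑ j, ((if G.Adj i j then X i j * Y i j else 0)
            + (if ¬ G.Adj i j then -(X i j ^ 2) else 0)) := by
      apply Finset.sum_congr rfl; intro i _
      apply Finset.sum_congr rfl; intro j _
      by_cases hij : G.Adj i j
      · simp [hij]
      · simp [hij, hYX i j hij]; ring
    simp_rw [Finset.sum_add_distrib] at this
    rw [hfro] at this
    have hneg : ∑ i, ∑ j, (if ¬ G.Adj i j then -(X i j ^ 2) else 0) = -b := by
      rw [hb, ← Finset.sum_neg_distrib]
      apply Finset.sum_congr rfl; intro i _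
      rw [← Finset.sum_neg_distrib]
      apply Finset.sum_congr rfl; intro j _
      by_cases hij : G.Adj i j <;> simp [hij]
    rw [hneg] at this
    linarith
  -- Cauchy-Schwarz: b^2 ≤ a * c
  have hcs : b ^ 2 ≤ a * c := by
    have key := Finset.sum_mul_sq_le_sq_mul_sq (Finset.univ ×ˢ Finset.univ)
      (fun p => if G.Adj p.1 p.2 then X p.1 p.2 else 0)
      (fun p => if G.Adj p.1 p.2 then Y p.1 p.2 else 0)
    simp only [Finset.sum_product] at key
    have e1 : ∀ i j : V, (if G.Adj i j then X i j else 0) * (if G.Adj i j then Y i j else 0)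
        = (if G.Adj i j then X i j * Y i j else 0) := by
      intro i j; by_cases hij : G.Adj i j <;> simp [hij]
    have e2 : ∀ i j : V, (if G.Adj i j then X i j else 0) ^ 2
        = (if G.Adj i j then X i j ^ 2 else 0) := by
      intro i j; by_cases hij : G.Adj i j <;> simp [hij]
    have e3 : ∀ i j : V, (if G.Adj i j then Y i j else 0) ^ 2
        = (if G.Adj i j then Y i j ^ 2 else 0) := by
      intro i j; by_cases hij : G.Adj i j <;> simp [hij]
    simp_rw [e1, e2, e3] at key
    rw [hcross] at key
    exact key
  rw [hsplitX, hsplitY]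
  rw [div_mul_eq_mul_div, one_mul, div_le_iff₀ (by linarith : (0:ℝ) < r - 1)]
  rcases eq_or_lt_of_le ha0 with hA | hA
  · have hb00 : b = 0 := by nlinarith [sq_nonneg b]
    nlinarith
  · nlinarith [mul_le_mul_of_nonneg_right h hb0, mul_le_mul_of_nonneg_left h ha0,
      mul_nonneg (mul_nonneg (le_of_lt (by linarith : (0:ℝ) < r - 1)) ha0) hc0,
      mul_le_mul_of_nonneg_left hcs (le_of_lt (by linarith : (0:ℝ) < r - 1)),
      mul_pos hA hA, mul_nonneg hb0 hc0]
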